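/- For every k ≥ 1 and n ≥ 2k, the number of S_n-orbits on pairs of size-k multisets from {1,...,n} (acting simultaneously entrywise) is independent of n. -/
import Mathlib

def pairRel (n k : ℕ) (p q : Sym (Fin n) k × Sym (Fin n) k) : Prop :=
  ∃ σ : Equiv.Perm (Fin n), p.1 = Sym.map σ q.1 ∧ p.2 = Sym.map σ q.2

lemma pairRel_equivalence (n k : ℕ) : Equivalence (pairRel n k) where
  refl p := ⟨1, by simp [Sym.map_id'], by simp [Sym.map_id']⟩
  symm := by
    rintro p q ⟨σ, h1, h2⟩
    refine ⟨σ⁻¹, ?_, ?_⟩ <;>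
      simp [h1, h2, Sym.map_map, Function.comp_def, Sym.map_id']
  trans := by
    rintro p q r ⟨σ, h1, h2⟩ ⟨τ, h3, h4⟩
    exact ⟨σ * τ, by simp [h1, h3, Sym.map_map, Function.comp_def], by
      simp [h2, h4, Sym.map_map, Function.comp_def]⟩

lemma quot_mk_eq_iff {n k : ℕ} {p q : Sym (Fin n) k × Sym (Fin n) k} :
    Quot.mk (pairRel n k) p = Quot.mk (pairRel n k) q ↔ pairRel n k p q := by
  rw [Quot.eq]
  constructor
  · intro h
    rw [Equivalence.eqvGen_eq (pairRel_equivalence n k)] at h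
    exact h
  · exact Relation.EqvGen.rel p q

/-- Extend an injection on a finset to a permutation. -/
lemma exists_perm_extend {n : ℕ} {s : Finset (Fin n)} {f : Fin n → Fin n}
    (hf : Set.InjOn f s) : ∃ τ : Equiv.Perm (Fin n), ∀ x ∈ s, τ x = f x := by
  have hcard : Fintype.card (Fin n) = (Finset.univ : Finset (Fin n)).card := by simp
  obtain ⟨g, hg⟩ := Finset.exists_equiv_extend_of_card_eq hcard
    (t := Finset.univ) (s := s) (f := f) (by simp) hf
  exact ⟨g.trans (Equiv.subtypeUnivEquiv (fun x => Finset.mem_univ x)), fun x hx => hg x hx⟩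

lemma key_equiv (k n m : ℕ) (hk : 1 ≤ k) (hn : 2 * k ≤ n) (hnm : n ≤ m) :
    Nonempty (Quot (pairRel n k) ≃ Quot (pairRel m k)) := by
  classical
  set ι : Fin n → Fin m := Fin.castLE hnm with hι
  have hιinj : Function.Injective ι := Fin.castLE_injective hnm
  have hιemb : Fin n ↪ Fin m := ⟨ι, hιinj⟩
  -- the map on representatives
  let f : Sym (Fin n) k × Sym (Fin n) k → Quot (pairRel m k) :=
    fun p => Quot.mk _ (Sym.map ι p.1, Sym.map ι p.2)
  have hresp : ∀ p q, pairRel n k p q → f p = f q := by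
    rintro p q ⟨τ, h1, h2⟩
    apply Quot.sound
    refine ⟨τ.viaFintypeEmbedding ⟨ι, hιinj⟩, ?_, ?_⟩
    · show Sym.map ι p.1 = _
      rw [h1, Sym.map_map, Sym.map_map]
      apply Sym.map_congr
      intro x _
      exact (Equiv.Perm.viaFintypeEmbedding_apply_image τ ⟨ι, hιinj⟩ x).symm
    · show Sym.map ι p.2 = _
      rw [h2, Sym.map_map, Sym.map_map]
      apply Sym.map_congr
      intro x _
      exact (Equiv.Perm.viaFintypeEmbedding_apply_image τ ⟨ι, hιinj⟩ x).symm
  let F : Quot (pairRel n k) → Quot (pairRel m k) := Quot.lift f hresp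
  have hFinj : Function.Injective F := by
    intro a b
    induction a using Quot.ind with | _ p =>
    induction b using Quot.ind with | _ q =>
    intro h
    have h' : pairRel m k (Sym.map ι p.1, Sym.map ι p.2) (Sym.map ι q.1, Sym.map ι q.2) :=
      quot_mk_eq_iff.mp h
    obtain ⟨σ, h1, h2⟩ := h'
    dsimp only at h1 h2
    apply quot_mk_eq_iff.mpr
    -- build g : Fin n → Fin n
    set S : Finset (Fin n) := (q.1 : Multiset (Fin n)).toFinset ∪
      (q.2 : Multiset (Fin n)).toFinset with hS
    have hrange : ∀ x ∈ S, ∃ y : Fin n, ι y = σ (ι x) := by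
      intro x hx
      have hmem : σ (ι x) ∈ Sym.map ι p.1 ∨ σ (ι x) ∈ Sym.map ι p.2 := by
        rw [hS, Finset.mem_union, Multiset.mem_toFinset, Multiset.mem_toFinset] at hx
        rcases hx with hx | hx
        · left; rw [h1, Sym.mem_map]; exact ⟨ι x, Sym.mem_map.mpr ⟨x, hx, rfl⟩, rfl⟩
        · right; rw [h2, Sym.mem_map]; exact ⟨ι x, Sym.mem_map.mpr ⟨x, hx, rfl⟩, rfl⟩
      rcases hmem with hm' | hm' <;>
      · obtain ⟨y, _, hy⟩ := Sym.mem_map.mp hm'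
        exact ⟨y, hy⟩
    let g : Fin n → Fin n := fun x =>
      if h : ∃ y : Fin n, ι y = σ (ι x) then h.choose else x
    have hg : ∀ x ∈ S, ι (g x) = σ (ι x) := by
      intro x hx
      have h := hrange x hx
      simp only [g, dif_pos h]
      exact h.choose_spec
    have hginj : Set.InjOn g S := by
      intro x hx y hy hxy
      rw [Finset.mem_coe] at hx hy
      have : ι (g x) = ι (g y) := by rw [hxy]
      rw [hg x hx, hg y hy] at this
      exact hιinj (σ.injective this)
    obtain ⟨τ, hτ⟩ := exists_perm_extend hginj
    refine ⟨τ, ?_, ?_⟩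
    · apply Sym.map_injective hιinj
      rw [h1, Sym.map_map, Sym.map_map]
      apply Sym.map_congr
      intro x hx
      have hxS : x ∈ S := by
        rw [hS, Finset.mem_union, Multiset.mem_toFinset]; left
        exact hx
      simp only [Function.comp_apply]
      rw [hτ x hxS, hg x hxS]
    · apply Sym.map_injective hιinj
      rw [h2, Sym.map_map, Sym.map_map]
      apply Sym.map_congr
      intro x hx
      have hxS : x ∈ S := by
        rw [hS, Finset.mem_union, Multiset.mem_toFinset]; right
        exact Multiset.mem_toFinset.mpr hx
      simp only [Function.comp_apply]
      rw [hτ x hxS, hg x hxS]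
  have hFsurj : Function.Surjective F := by
    intro b
    induction b using Quot.ind with | _ p =>
    set S : Finset (Fin m) := (p.1 : Multiset (Fin m)).toFinset ∪
      (p.2 : Multiset (Fin m)).toFinset with hS
    have hScard : S.card ≤ n := by
      calc S.card ≤ (p.1 : Multiset (Fin m)).toFinset.card +
          (p.2 : Multiset (Fin m)).toFinset.card := Finset.card_union_le _ _
        _ ≤ k + k := by
            have h1 : (p.1 : Multiset (Fin m)).toFinset.card ≤ k := by
              simpa using Multiset.toFinset_card_le (p.1 : Multiset (Fin m))
            have h2 : (p.2 : Multiset (Fin m)).toFinset.card ≤ k := by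
              simpa using Multiset.toFinset_card_le (p.2 : Multiset (Fin m))
            omega
        _ ≤ n := by omega
    -- embedding from the support into Fin n
    have hcard : Fintype.card {x // x ∈ S} ≤ Fintype.card (Fin n) := by
      simpa using hScard
    obtain ⟨u⟩ := Function.Embedding.nonempty_of_card_le hcard
    let g : Fin m → Fin m := fun x => if h : x ∈ S then ι (u ⟨x, h⟩) else x
    have hginj : Set.InjOn g S := by
      intro x hx y hy hxy
      rw [Finset.mem_coe] at hx hy
      simp only [g, dif_pos hx, dif_pos hy] at hxy
      have := u.injective (hιinj hxy)
      exact congrArg Subtype.val this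
    obtain ⟨σ, hσ⟩ := exists_perm_extend hginj
    have hσrange : ∀ x ∈ S, ∃ y : Fin n, ι y = σ x := by
      intro x hx
      rw [hσ x hx]
      simp only [g, dif_pos hx]
      exact ⟨u ⟨x, hx⟩, rfl⟩
    have h0 : 0 < n := lt_of_lt_of_le (by omega) hn
    let r : Fin m → Fin n := fun y => if h : (y : ℕ) < n then ⟨y, h⟩ else ⟨0, h0⟩
    have hr : ∀ y : Fin m, (y : ℕ) < n → ι (r y) = y := by
      intro y hy
      simp only [r, dif_pos hy]
      rfl
    have hkey : ∀ s : Sym (Fin m) k, (∀ x ∈ s, x ∈ S) →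
        Sym.map ι (Sym.map r (Sym.map σ s)) = Sym.map σ s := by
      intro s hs
      rw [Sym.map_map, Sym.map_map]
      apply Sym.map_congr
      intro x hx
      obtain ⟨y, hy⟩ := hσrange x (hs x hx)
      simp only [Function.comp_apply]
      rw [← hy]
      apply hr
      simp [ι]
    refine ⟨Quot.mk _ (Sym.map r (Sym.map σ p.1), Sym.map r (Sym.map σ p.2)), ?_⟩
    show Quot.mk _ _ = _
    have e1 : Sym.map ι (Sym.map r (Sym.map σ p.1)) = Sym.map σ p.1 :=
      hkey p.1 (fun x hx => by
        rw [hS, Finset.mem_union, Multiset.mem_toFinset]; left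
        exact Sym.mem_coe.mpr hx)
    have e2 : Sym.map ι (Sym.map r (Sym.map σ p.2)) = Sym.map σ p.2 :=
      hkey p.2 (fun x hx => by
        rw [hS, Finset.mem_union, Multiset.mem_toFinset]; right
        exact Multiset.mem_toFinset.mpr (Sym.mem_coe.mpr hx))
    rw [e1, e2]
    exact Quot.sound ⟨σ, rfl, rfl⟩
  exact ⟨Equiv.ofBijective F ⟨hFinj, hFsurj⟩⟩

/-- For `k ≥ 1` and `n, m ≥ 2k`, the number of `S_n`-orbits on pairs of size-`k`
multisets from an `n`-element set is independent of `n`. -/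
theorem card_orbits_stable (k n m : ℕ) (hk : 1 ≤ k) (hn : 2 * k ≤ n) (hm : 2 * k ≤ m) :
    Nat.card (Quot (pairRel n k)) = Nat.card (Quot (pairRel m k)) := by
  rcases le_total n m with h | h
  · obtain ⟨e⟩ := key_equiv k n m hk hn h
    exact Nat.card_congr e
  · obtain ⟨e⟩ := key_equiv k m n hk hm h
    exact (Nat.card_congr e).symm
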